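/- (Lower bound) If the field F has at least ⌊d/2⌋ + d elements, then any generator set of lines with respect to hyperplanes in PG(d,F) contains at least ⌊d/2⌋ + d lines. -/

import Mathlib

open Module Submodule LinearMap

section helpers

variable {F V : Type*} [Field F] [AddCommGroup V] [Module F V]

theorem aux_ker_le_ker {p q : V →ₗ[F] F} (hp : p ≠ 0) (h : LinearMap.ker p ≤ LinearMap.ker q) :
    ∃ c : F, q = c • p := by
  obtain ⟨x, hx⟩ : ∃ x, p x ≠ 0 := by
    by_contra hc; push_neg at hc; exact hp (LinearMap.ext fun y => by simp [hc y])
  refine ⟨q x / p x, LinearMap.ext fun y => ?_⟩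
  have hm : y - (p y / p x) • x ∈ LinearMap.ker p := by
    simp [LinearMap.mem_ker, div_mul_cancel₀ _ hx]
  have h2 := h hm
  rw [LinearMap.mem_ker, map_sub, map_smul, sub_eq_zero] at h2
  rw [LinearMap.smul_apply, smul_eq_mul, h2, smul_eq_mul]
  field_simp

variable [FiniteDimensional F V]

theorem aux_finrank_sup_le (A : Finset (Submodule F V)) (h : ∀ p ∈ A, finrank F p = 2) :
    finrank F (A.sup _root_.id : Submodule F V) ≤ 2 * A.card := by
  classical
  induction A using Finset.induction_on with
  | empty => simp
  | @insert a A ha ih =>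
    rw [Finset.sup_insert, Finset.card_insert_of_notMem ha]
    show finrank F (_root_.id a ⊔ A.sup _root_.id : Submodule F V) ≤ _
    have e := Submodule.finrank_sup_add_finrank_inf_eq (_root_.id a) (A.sup _root_.id)
    have h2 : finrank F (_root_.id a : Submodule F V) = 2 := h a (Finset.mem_insert_self a A)
    have h3 := ih (fun p hp => h p (Finset.mem_insert_of_mem hp))
    omega

theorem aux_inf_ker {ι : Type*} (A : Finset ι) (lam : ι → (V →ₗ[F] F)) :
    finrank F V ≤ finrank F (⨅ i ∈ A, LinearMap.ker (lam i) : Submodule F V) + A.card := by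
  classical
  induction A using Finset.induction_on with
  | empty =>
    have ht : (⨅ i ∈ (∅ : Finset ι), LinearMap.ker (lam i)) = (⊤ : Submodule F V) := by simp
    rw [ht, finrank_top]
    simp
  | @insert a A ha ih =>
    rw [Finset.iInf_insert, Finset.card_insert_of_notMem ha]
    have e := Submodule.finrank_sup_add_finrank_inf_eq (LinearMap.ker (lam a))
      (⨅ i ∈ A, LinearMap.ker (lam i))
    have e2 := LinearMap.finrank_range_add_finrank_ker (lam a)
    have e3 : finrank F (LinearMap.range (lam a)) ≤ 1 :=
      le_trans (Submodule.finrank_le _) (le_of_eq (Module.finrank_self F))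
    have e4 := Submodule.finrank_le (LinearMap.ker (lam a) ⊔ ⨅ i ∈ A, LinearMap.ker (lam i))
    omega

theorem aux_hyperplane_sup {p q : Submodule F V} (hp : finrank F p + 1 = finrank F V)
    (hq : finrank F q + 1 = finrank F V) (hne : p ≠ q) : p ⊔ q = ⊤ := by
  by_contra h
  have h1 : finrank F (p ⊔ q : Submodule F V) < finrank F V :=
    Submodule.finrank_lt h
  have h2 : p = p ⊔ q := Submodule.eq_of_le_of_finrank_le le_sup_left (by omega)
  have h3 : q ≤ p := h2 ▸ le_sup_right
  exact hne (Submodule.eq_of_le_of_finrank_le h3 (by omega)).symm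

theorem aux_finrank_ker {p : V →ₗ[F] F} (hp : p ≠ 0) :
    finrank F (LinearMap.ker p) + 1 = finrank F V := by
  have e2 := LinearMap.finrank_range_add_finrank_ker p
  have e3 : finrank F (LinearMap.range p) ≤ 1 :=
    le_trans (Submodule.finrank_le _) (le_of_eq (Module.finrank_self F))
  have e4 : finrank F (LinearMap.range p) ≠ 0 := fun h0 =>
    hp (LinearMap.range_eq_bot.mp (Submodule.finrank_eq_zero.mp h0))
  omega

end helpers

set_option maxHeartbeats 1000000 in
/-- Lower bound: if `F` has at least `⌊d/2⌋ + d` elements, then every generator set of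
lines with respect to hyperplanes in `PG(d,F)` contains at least `⌊d/2⌋ + d` lines. -/
theorem generator_lower_bound (F : Type*) [Field F] (d : ℕ)
    (hF : ((d / 2 + d : ℕ) : Cardinal) ≤ Cardinal.mk F)
    (L : Set (Submodule F (Fin (d + 1) → F)))
    (hL : ∀ ℓ ∈ L, Module.finrank F ℓ = 2)
    (hgen : ∀ Pl : Submodule F (Fin (d + 1) → F), Module.finrank F Pl = d →
      Submodule.span F (⋃ ℓ ∈ L, ((ℓ : Set (Fin (d + 1) → F)) ∩ (Pl : Set (Fin (d + 1) → F)))) = Pl) :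
    ((d / 2 + d : ℕ) : Cardinal) ≤ Cardinal.mk L := by
  classical
  rcases Nat.eq_zero_or_pos d with hd0 | hd1
  · subst hd0; simp
  by_contra hcon
  push_neg at hcon
  set N := d / 2 + d with hN
  -- L is finite with fewer than N elements
  have hfin : Finite ↥L := Cardinal.lt_aleph0_iff_finite.mp
    (hcon.trans (Cardinal.nat_lt_aleph0 N))
  haveI := Fintype.ofFinite ↥L
  have hn : Fintype.card ↥L < N := by
    rw [Cardinal.mk_fintype] at hcon; exact_mod_cast hcon
  set s : Finset (Submodule F (Fin (d + 1) → F)) := L.toFinset with hs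
  have hsmem : ∀ ℓ, ℓ ∈ s ↔ ℓ ∈ L := fun ℓ => Set.mem_toFinset
  have hscard : s.card = Fintype.card ↥L := Set.toFinset_card L
  clear_value s
  set n := s.card with hncard
  have hnN : n < N := hscard ▸ hn
  clear_value N n
  -- choose a "basis" of every line
  have hbasis : ∀ ℓ : Submodule F (Fin (d + 1) → F), ∃ u v : Fin (d + 1) → F,
      ℓ ∈ L → u ∈ ℓ ∧ v ∈ ℓ ∧ (∀ x ∈ ℓ, ∃ a b : F, x = a • u + b • v) ∧
        ∀ a b : F, a • u + b • v = 0 → a = 0 ∧ b = 0 := by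
    intro ℓ
    by_cases hm : ℓ ∈ L
    · have b := Module.finBasisOfFinrankEq F ℓ (hL ℓ hm)
      refine ⟨↑(b 0), ↑(b 1), fun _ => ⟨(b 0).2, (b 1).2, ?_, ?_⟩⟩
      · intro x hx
        refine ⟨b.repr ⟨x, hx⟩ 0, b.repr ⟨x, hx⟩ 1, ?_⟩
        have h := b.sum_repr ⟨x, hx⟩
        rw [Fin.sum_univ_two] at h
        have h2 := congrArg Subtype.val h
        rw [Submodule.coe_add, SetLike.val_smul, SetLike.val_smul] at h2
        exact h2.symm
      · intro a c hac
        have li := b.linearIndependent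
        rw [Fintype.linearIndependent_iff] at li
        have h0 : a • b 0 + c • b 1 = (0 : ↥ℓ) := by
          apply Subtype.val_injective
          rw [Submodule.coe_add, SetLike.val_smul, SetLike.val_smul, ZeroMemClass.coe_zero]
          exact hac
        have h1 := li ![a, c] (by
          rw [Fin.sum_univ_two, Matrix.cons_val_zero, Matrix.cons_val_one, Matrix.cons_val_zero]
          exact h0)
        exact ⟨h1 0, h1 1⟩
    · exact ⟨0, 0, fun h => absurd h hm⟩
  choose u v huv using hbasis
  -- the subset A of lines to be contained in ker f
  set m := n + 1 - d with hmdef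
  clear_value m
  obtain ⟨A, hAs, hAcard⟩ := Finset.exists_subset_card_eq (s := s) (n := m) (by omega)
  set T := A.sup _root_.id with hT
  clear_value T
  have hVrank : finrank F (Fin (d + 1) → F) = d + 1 := Module.finrank_fin_fun F
  have hTrank : finrank F T ≤ 2 * m := by
    rw [hT]
    have h := aux_finrank_sup_le A (fun p hp => hL p ((hsmem p).mp (hAs hp)))
    omega
  have hTlt : T < ⊤ := lt_top_iff_ne_top.mpr (fun h => by
    rw [h, finrank_top, hVrank] at hTrank; omega)
  obtain ⟨f, hf0, hfT⟩ := Submodule.exists_dual_map_eq_bot_of_lt_top hTlt inferInstance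
  have hfker : T ≤ LinearMap.ker f := by
    intro x hx
    rw [LinearMap.mem_ker]
    have hmem : f x ∈ Submodule.map f T := ⟨x, hx, rfl⟩
    rw [hfT] at hmem
    exact (Submodule.mem_bot F).mp hmem
  -- the functional g
  set lam : Submodule F (Fin (d + 1) → F) → (Module.Dual F (Fin (d + 1) → F) →ₗ[F] F) :=
    fun ℓ => f (v ℓ) • Module.Dual.eval F (Fin (d + 1) → F) (u ℓ)
      - f (u ℓ) • Module.Dual.eval F (Fin (d + 1) → F) (v ℓ) with hlam
  clear_value lam
  set K := ⨅ ℓ ∈ (s \ A), LinearMap.ker (lam ℓ) with hK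
  clear_value K
  have hKrank : 2 ≤ finrank F K := by
    have h1 := aux_inf_ker (s \ A) lam
    rw [Subspace.dual_finrank_eq, hVrank] at h1
    have h2 : (s \ A).card = n - m := by rw [Finset.card_sdiff_of_subset hAs, hAcard, ← hncard]
    rw [← hK] at h1
    omega
  have hgex : ¬ K ≤ (F ∙ f) := fun hle => by
    have h1 := Submodule.finrank_mono hle
    rw [finrank_span_singleton hf0] at h1
    omega
  obtain ⟨g, hgK, hgf⟩ := SetLike.not_le_iff_exists.mp hgex
  have hg0 : g ≠ 0 := fun h => hgf (by rw [h]; exact Submodule.zero_mem _)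
  have hfnotg : ∀ c : F, f ≠ c • g := by
    intro c hc
    apply hgf
    have hc0 : c ≠ 0 := fun h => hf0 (by rw [hc, h, zero_smul])
    rw [Submodule.mem_span_singleton]
    exact ⟨c⁻¹, by rw [hc, smul_smul, inv_mul_cancel₀ hc0, one_smul]⟩
  have hker_f : finrank F (LinearMap.ker f) + 1 = d + 1 := by
    have h := aux_finrank_ker hf0; rwa [hVrank] at h
  have hker_g : finrank F (LinearMap.ker g) + 1 = d + 1 := by
    have h := aux_finrank_ker hg0; rwa [hVrank] at h
  -- every line contains a nonzero vector killed by both f and g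
  have hwitness : ∀ ℓ ∈ L, ∃ w, w ∈ ℓ ∧ w ≠ 0 ∧ f w = 0 ∧ g w = 0 := by
    intro ℓ hm
    obtain ⟨hu, hv, hrep, hind⟩ := huv ℓ hm
    by_cases hfl : ∀ x ∈ ℓ, f x = 0
    · have hbot : ℓ ⊓ LinearMap.ker g ≠ ⊥ := by
        intro hb
        have e := Submodule.finrank_sup_add_finrank_inf_eq ℓ (LinearMap.ker g)
        rw [hb, finrank_bot] at e
        have e2 : finrank F (ℓ ⊔ LinearMap.ker g : Submodule F _) ≤ d + 1 := by
          have h := Submodule.finrank_le (ℓ ⊔ LinearMap.ker g : Submodule F _)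
          rwa [hVrank] at h
        have e3 : finrank F ℓ = 2 := hL ℓ hm
        omega
      obtain ⟨w, hw, hw0⟩ := Submodule.exists_mem_ne_zero_of_ne_bot hbot
      obtain ⟨hw1, hw2⟩ := Submodule.mem_inf.mp hw
      exact ⟨w, hw1, hw0, hfl w hw1, LinearMap.mem_ker.mp hw2⟩
    · push_neg at hfl
      obtain ⟨x, hx, hfx⟩ := hfl
      have hlA : ℓ ∉ A := by
        intro hA
        have hle : ℓ ≤ T := by rw [hT]; exact Finset.le_sup (f := _root_.id) hA
        exact hfx (LinearMap.mem_ker.mp (hfker (hle hx)))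
      have hlB : ℓ ∈ s \ A := Finset.mem_sdiff.mpr ⟨(hsmem ℓ).mpr hm, hlA⟩
      have hglam : lam ℓ g = 0 := by
        have hle : K ≤ LinearMap.ker (lam ℓ) := by
          rw [hK]; exact iInf₂_le ℓ hlB
        exact LinearMap.mem_ker.mp (hle hgK)
      refine ⟨f (v ℓ) • u ℓ - f (u ℓ) • v ℓ,
        sub_mem (Submodule.smul_mem _ _ hu) (Submodule.smul_mem _ _ hv), ?_, ?_, ?_⟩
      · intro h0
        have h1 : f (v ℓ) • u ℓ + (-(f (u ℓ))) • v ℓ = 0 := by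
          rw [neg_smul, ← sub_eq_add_neg]; exact h0
        obtain ⟨hA1, hA2⟩ := hind _ _ h1
        obtain ⟨a, b, hab⟩ := hrep x hx
        apply hfx
        rw [hab, map_add, map_smul, map_smul, hA1, neg_eq_zero.mp hA2]
        simp
      · rw [map_sub, map_smul, map_smul, smul_eq_mul, smul_eq_mul]; ring
      · have h2 : g (f (v ℓ) • u ℓ - f (u ℓ) • v ℓ) = lam ℓ g := by
          rw [hlam]
          simp [smul_eq_mul]
        rw [h2, hglam]
  -- the codimension-2 subspace W
  set W := LinearMap.ker f ⊓ LinearMap.ker g with hWdef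
  clear_value W
  have hWrank : finrank F W + 2 = d + 1 := by
    have hne : LinearMap.ker f ≠ LinearMap.ker g := by
      intro h
      obtain ⟨c, hc⟩ := aux_ker_le_ker hf0 h.le
      exact hgf (Submodule.mem_span_singleton.mpr ⟨c, hc.symm⟩)
    have hsup := aux_hyperplane_sup (by rw [hVrank]; exact hker_f)
      (by rw [hVrank]; exact hker_g) hne
    have e := Submodule.finrank_sup_add_finrank_inf_eq (LinearMap.ker f) (LinearMap.ker g)
    rw [hsup, finrank_top, hVrank, ← hWdef] at e
    omega
  -- the hyperplanes through W
  have hplane : ∀ a : F, f + a • g ≠ 0 := by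
    intro a h
    apply hfnotg (-a)
    apply LinearMap.ext
    intro x
    have hx := DFunLike.congr_fun h x
    simp only [LinearMap.add_apply, LinearMap.smul_apply, smul_eq_mul,
      LinearMap.zero_apply] at hx
    rw [LinearMap.smul_apply, smul_eq_mul]
    linear_combination hx
  have hPrank : ∀ a : F, finrank F (LinearMap.ker (f + a • g)) = d := by
    intro a
    have h1 := aux_finrank_ker (hplane a)
    rw [hVrank] at h1
    omega
  have hWP : ∀ a : F, W ≤ LinearMap.ker (f + a • g) := by
    intro a x hx
    rw [hWdef] at hx
    obtain ⟨h1, h2⟩ := Submodule.mem_inf.mp hx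
    rw [LinearMap.mem_ker] at h1 h2 ⊢
    simp [h1, h2]
  have hker_inj : ∀ a b : F, a ≠ b →
      LinearMap.ker (f + a • g) ≠ LinearMap.ker (f + b • g) := by
    intro a b hab h
    obtain ⟨c, hc⟩ := aux_ker_le_ker (hplane a) h.le
    by_cases hc1 : c = 1
    · rw [hc1, one_smul] at hc
      have h1 : (b - a) • g = 0 := by
        apply LinearMap.ext
        intro x
        have hx := DFunLike.congr_fun hc x
        simp only [LinearMap.add_apply, LinearMap.smul_apply, smul_eq_mul] at hx
        rw [LinearMap.smul_apply, smul_eq_mul, LinearMap.zero_apply]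
        linear_combination hx
      rcases smul_eq_zero.mp h1 with h2 | h2
      · exact hab (sub_eq_zero.mp h2).symm
      · exact hg0 h2
    · apply hfnotg ((c * a - b) / (1 - c))
      have hc1' : (1 : F) - c ≠ 0 := sub_ne_zero.mpr (Ne.symm hc1)
      apply LinearMap.ext
      intro x
      have hx := DFunLike.congr_fun hc x
      simp only [LinearMap.add_apply, LinearMap.smul_apply, smul_eq_mul] at hx
      rw [LinearMap.smul_apply, smul_eq_mul]
      field_simp
      linear_combination hx
  -- each hyperplane through W needs a line of L inside it but not inside W
  have hkey : ∀ a : F, ∃ ℓ, ℓ ∈ L ∧ ℓ ≤ LinearMap.ker (f + a • g) ∧ ¬ ℓ ≤ W := by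
    intro a
    by_contra hno
    push_neg at hno
    have hspan : Submodule.span F
        (⋃ ℓ ∈ L, ((ℓ : Set (Fin (d + 1) → F)) ∩ (LinearMap.ker (f + a • g) : Set (Fin (d + 1) → F)))) ≤ W := by
      rw [Submodule.span_le]
      intro x hx
      simp only [Set.mem_iUnion, Set.mem_inter_iff, SetLike.mem_coe] at hx
      obtain ⟨ℓ, hmL, hxl, hxP⟩ := hx
      by_cases hc : ℓ ≤ LinearMap.ker (f + a • g)
      · exact hno ℓ hmL hc hxl
      · obtain ⟨w, hwl, hw0, hwf, hwg⟩ := hwitness ℓ hmL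
        have hwW : w ∈ W := by
          rw [hWdef]
          exact Submodule.mem_inf.mpr ⟨LinearMap.mem_ker.mpr hwf, LinearMap.mem_ker.mpr hwg⟩
        have hwP : w ∈ ℓ ⊓ LinearMap.ker (f + a • g) := Submodule.mem_inf.mpr
          ⟨hwl, LinearMap.mem_ker.mpr (by simp [hwf, hwg])⟩
        have h1 : finrank F (ℓ ⊓ LinearMap.ker (f + a • g) : Submodule F _) ≤ 1 := by
          by_contra h1
          push_neg at h1
          have h2 := Submodule.eq_of_le_of_finrank_le
            (inf_le_left : ℓ ⊓ LinearMap.ker (f + a • g) ≤ ℓ) (by rw [hL ℓ hmL]; omega)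
          exact hc (h2 ▸ inf_le_right)
        have h2 : (F ∙ w) = ℓ ⊓ LinearMap.ker (f + a • g) :=
          Submodule.eq_of_le_of_finrank_le
            ((Submodule.span_singleton_le_iff_mem _ _).mpr hwP)
            (by rw [finrank_span_singleton hw0]; exact h1)
        have h3 : x ∈ (F ∙ w) := h2 ▸ Submodule.mem_inf.mpr ⟨hxl, hxP⟩
        obtain ⟨c, rfl⟩ := Submodule.mem_span_singleton.mp h3
        exact Submodule.smul_mem _ _ hwW
    rw [hgen _ (hPrank a)] at hspan
    have h4 := Submodule.finrank_mono hspan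
    rw [hPrank a] at h4
    omega
  -- build an injection from Fin N into L
  have hemb : Nonempty (Fin N ↪ F) := by
    apply Cardinal.lift_mk_le'.mp
    simpa using hF
  obtain ⟨e⟩ := hemb
  choose lsel h1sel h2sel h3sel using hkey
  set t : Fin N → ↥L := fun i => ⟨lsel (e i), h1sel (e i)⟩ with ht
  have tinj : Function.Injective t := by
    intro i j hij
    by_contra hne
    have heij : e i ≠ e j := fun h => hne (e.injective h)
    have hval : lsel (e i) = lsel (e j) := congrArg Subtype.val hij
    have hPne : LinearMap.ker (f + e i • g) ≠ LinearMap.ker (f + e j • g) :=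
      hker_inj _ _ heij
    have hsup : LinearMap.ker (f + e i • g) ⊔ LinearMap.ker (f + e j • g) = ⊤ :=
      aux_hyperplane_sup (by rw [hVrank, hPrank]) (by rw [hVrank, hPrank]) hPne
    have e5 := Submodule.finrank_sup_add_finrank_inf_eq
      (LinearMap.ker (f + e i • g)) (LinearMap.ker (f + e j • g))
    rw [hsup, finrank_top, hVrank, hPrank, hPrank] at e5
    have hWeq : W = LinearMap.ker (f + e i • g) ⊓ LinearMap.ker (f + e j • g) :=
      Submodule.eq_of_le_of_finrank_le (le_inf (hWP _) (hWP _)) (by omega)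
    apply h3sel (e i)
    rw [hWeq]
    exact le_inf (h2sel (e i)) (by rw [hval]; exact h2sel (e j))
  have hcard := Fintype.card_le_of_injective t tinj
  rw [Fintype.card_fin] at hcard
  omega
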